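/- Let k be a field, V and W finite-dimensional k-vector spaces, and let (f, g) be a nilpotent pair, i.e. f : V →ₗ[k] W, g : W →ₗ[k] V with g ∘ f nilpotent. If v ∈ V is balanced and f v ≠ 0, then the vector f v ∈ W is unbalanced, i.e. dim T[g (f v)] + 1 = dim T'[f v]. -/
import Mathlib

/-- `orbitSpan T v` is the submodule `T[v]` spanned by `{T^i v : i ∈ ℕ}`. -/
def orbitSpan {k V : Type*} [Field k] [AddCommGroup V] [Module k V]
    (T : V →ₗ[k] V) (v : V) : Submodule k V :=
  Submodule.span k (Set.range fun i : ℕ => (T ^ i) v)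

section Aux

variable {k V : Type*} [Field k] [AddCommGroup V] [Module k V]

open Classical

lemma pow_apply_eq_zero_of_ge {T : V →ₗ[k] V} {v : V} {d : ℕ}
    (hd : (T ^ d) v = 0) {i : ℕ} (hi : d ≤ i) : (T ^ i) v = 0 := by
  have : T ^ i = T ^ (i - d) * T ^ d := by rw [← pow_add]; congr 1; omega
  rw [this, Module.End.mul_apply, hd, map_zero]

lemma finrank_orbitSpan (T : V →ₗ[k] V) (v : V) (hex : ∃ n, (T ^ n) v = 0) :
    Module.finrank k (orbitSpan T v) = Nat.find hex := by
  set d := Nat.find hex with hdd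
  have hdz : (T ^ d) v = 0 := Nat.find_spec hex
  have hspan : orbitSpan T v
      = Submodule.span k (Set.range fun i : Fin d => (T ^ (i : ℕ)) v) := by
    apply le_antisymm <;> rw [orbitSpan, Submodule.span_le] <;> rintro _ ⟨i, rfl⟩
    · by_cases hi : (i : ℕ) < d
      · exact Submodule.subset_span ⟨⟨i, hi⟩, rfl⟩
      · simp only
        rw [pow_apply_eq_zero_of_ge hdz (by omega)]
        exact Submodule.zero_mem _
    · exact Submodule.subset_span ⟨(i : ℕ), rfl⟩
  have hli : LinearIndependent k (fun i : Fin d => (T ^ (i : ℕ)) v) := by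
    rw [Fintype.linearIndependent_iff]
    intro c hc
    by_contra hne
    push_neg at hne
    obtain ⟨i0, hi0⟩ := hne
    have hP : ∃ n : ℕ, ∃ h : n < d, c ⟨n, h⟩ ≠ 0 := ⟨i0, i0.2, hi0⟩
    set j := Nat.find hP with hjj
    obtain ⟨hjd, hcj⟩ : ∃ h : j < d, c ⟨j, h⟩ ≠ 0 := Nat.find_spec hP
    set j' : Fin d := ⟨j, hjd⟩
    have hc2 : (∑ i : Fin d, c i • (T ^ (d - 1 - j + (i : ℕ))) v) = 0 := by
      have := congrArg (T ^ (d - 1 - j)) hc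
      rw [map_sum, map_zero] at this
      rw [← this]
      refine Finset.sum_congr rfl fun i _ => ?_
      rw [map_smul, ← Module.End.mul_apply, ← pow_add]
    rw [Finset.sum_eq_single j' (fun i _ hij => ?_) (fun h => absurd (Finset.mem_univ j') h)]
        at hc2
    · have hexp : d - 1 - j + (j' : ℕ) = d - 1 := by simp only [j']; omega
      rw [hexp] at hc2
      have : (T ^ (d - 1)) v = 0 := by
        have := (smul_eq_zero.mp hc2).resolve_left hcj
        exact this
      exact Nat.find_min hex (hdd ▸ (show d - 1 < d by omega)) this
    · rcases lt_or_gt_of_ne (fun h : (i : ℕ) = (j' : ℕ) => hij (Fin.ext h)) with hlt | hgt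
      · have : c i = 0 := by
          by_contra hci
          exact Nat.find_min hP (m := (i : ℕ)) (hjj ▸ hlt) ⟨i.2, by simpa using hci⟩
        rw [this, zero_smul]
      · rw [pow_apply_eq_zero_of_ge hdz (by simp only [j'] at hgt; omega), smul_zero]
  rw [hspan, finrank_span_eq_card hli, Fintype.card_fin]

end Aux

theorem image_of_balanced_is_unbalanced
    (k V W : Type*) [Field k] [AddCommGroup V] [Module k V] [FiniteDimensional k V]
    [AddCommGroup W] [Module k W] [FiniteDimensional k W]
    (f : V →ₗ[k] W) (g : W →ₗ[k] V) (hnil : IsNilpotent (g ∘ₗ f))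
    (v : V)
    (hv : Module.finrank k (orbitSpan (g ∘ₗ f) v) =
      Module.finrank k (orbitSpan (f ∘ₗ g) (f v)))
    (hfv : f v ≠ 0) :
    Module.finrank k (orbitSpan (g ∘ₗ f) (g (f v))) + 1 =
      Module.finrank k (orbitSpan (f ∘ₗ g) (f v)) := by
  classical
  obtain ⟨n, hn⟩ := hnil
  have hcomm : ∀ (i : ℕ) (x : V), ((f ∘ₗ g) ^ i) (f x) = f (((g ∘ₗ f) ^ i) x) := by
    intro i
    induction i with
    | zero => intro x; simp
    | succ i ih =>
      intro x
      rw [pow_succ', pow_succ', Module.End.mul_apply, Module.End.mul_apply, ih]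
      rfl
  have hexv : ∃ m, ((g ∘ₗ f) ^ m) v = 0 := ⟨n, by rw [hn]; rfl⟩
  set d := Nat.find hexv with hdd
  have hdz : ((g ∘ₗ f) ^ d) v = 0 := Nat.find_spec hexv
  have hdpos : 0 < d := by
    rcases Nat.eq_zero_or_pos d with h | h
    · exfalso
      apply hfv
      have : v = 0 := by simpa [h] using hdz
      rw [this, map_zero]
    · exact h
  -- index of f v under f ∘ₗ g
  have hexw : ∃ m, (((f ∘ₗ g) ^ m)) (f v) = 0 := by
    exact ⟨d, by rw [hcomm d v, hdz, map_zero]⟩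
  -- index of g (f v) under g ∘ₗ f
  have hgfv : g (f v) = (g ∘ₗ f) v := rfl
  have hexv' : ∃ m, ((g ∘ₗ f) ^ m) (g (f v)) = 0 := by
    refine ⟨d - 1, ?_⟩
    rw [hgfv, ← LinearMap.comp_apply, ← Module.End.mul_eq_comp, ← pow_succ]
    have : d - 1 + 1 = d := by omega
    rw [this, hdz]
  have hfind' : Nat.find hexv' = d - 1 := by
    rw [Nat.find_eq_iff]
    constructor
    · rw [hgfv, ← LinearMap.comp_apply, ← Module.End.mul_eq_comp, ← pow_succ]
      have h1 : d - 1 + 1 = d := by omega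
      rw [h1]; exact hdz
    · intro m hm hmz
      rw [hgfv, ← LinearMap.comp_apply, ← Module.End.mul_eq_comp, ← pow_succ] at hmz
      exact Nat.find_min hexv (hdd ▸ (show m + 1 < d by omega)) hmz
  rw [finrank_orbitSpan _ _ hexv'] at *
  rw [finrank_orbitSpan _ _ hexv, finrank_orbitSpan _ _ hexw] at hv
  rw [finrank_orbitSpan _ _ hexw, hfind', ← hv]
  omega
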